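/- arXiv:2411.06614 — 8 statements merged into one kernel-verified Lean document; each statement's English description precedes it below -/
import Mathlib

section
/- Let A ∈ ℝ^{m×n} (m ≥ 2) have rows A_1,…,A_m with ‖A_i‖ = 1 for all i and A_i ≠ ±A_j for i ≠ j. Then for every x ∈ ℝ^n, (1/(m(m−1))) · Σ_{i≠j} ‖φ_{i,j}(A) x‖² ≥ ‖Ax‖² + (2/(m(m−1))) · ( ‖Ax‖² − ‖AᵀAx‖² ). -/
open Finset Matrix

/-- The Kaczmarz Kac update: replace row `i` of `A` by the renormalized projection of
`A i` onto the orthogonal complement of `A j`. -/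
noncomputable def kkPhi {m n : ℕ} (A : Matrix (Fin m) (Fin n) ℝ) (i j : Fin m) :
    Matrix (Fin m) (Fin n) ℝ :=
  A.updateRow i (fun k =>
    (A i k - (∑ l, A i l * A j l) * A j k) / Real.sqrt (1 - (∑ l, A i l * A j l) ^ 2))

theorem kaczmarz_kac_expectation_lower_bound {m n : ℕ} (hm : 2 ≤ m)
    (A : Matrix (Fin m) (Fin n) ℝ)
    (hnorm : ∀ i, ∑ k, (A i k) ^ 2 = 1)
    (hdist : ∀ i j, i ≠ j → A i ≠ A j ∧ A i ≠ -A j)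
    (x : Fin n → ℝ) :
    (1 / ((m : ℝ) * ((m : ℝ) - 1))) *
        ∑ i : Fin m, ∑ j ∈ Finset.univ.filter (fun j => j ≠ i),
          ∑ k, ((kkPhi A i j).mulVec x k) ^ 2
      ≥ (∑ k, (A.mulVec x k) ^ 2) +
        (2 / ((m : ℝ) * ((m : ℝ) - 1))) *
          ((∑ k, (A.mulVec x k) ^ 2) - ∑ k, (Aᵀ.mulVec (A.mulVec x) k) ^ 2) := by
  set a : Fin m → ℝ := A.mulVec x with ha
  set c : Fin m → Fin m → ℝ := fun i j => ∑ l, A i l * A j l with hcdef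
  -- strict Cauchy-Schwarz
  have hc1 : ∀ i j : Fin m, i ≠ j → (c i j)^2 < 1 := by
    intro i j hij
    have key : ∑ l, (A i l - c i j * A j l)^2 = 1 - (c i j)^2 := by
      calc ∑ l, (A i l - c i j * A j l)^2
          = ∑ l, (A i l ^ 2 - 2 * c i j * (A i l * A j l) + (c i j)^2 * A j l ^ 2) :=
            Finset.sum_congr rfl fun l _ => by ring
        _ = (∑ l, A i l ^ 2) - 2 * c i j * (∑ l, A i l * A j l)
              + (c i j)^2 * (∑ l, A j l ^ 2) := by
            rw [Finset.sum_add_distrib, Finset.sum_sub_distrib, ← Finset.mul_sum,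
              ← Finset.mul_sum]
        _ = 1 - (c i j)^2 := by
            rw [hnorm i, hnorm j, show (∑ l, A i l * A j l) = c i j from rfl]; ring
    have hnn : 0 ≤ 1 - (c i j)^2 := by
      rw [← key]; exact Finset.sum_nonneg fun l _ => sq_nonneg _
    rcases lt_or_eq_of_le hnn with h | h
    · linarith
    · exfalso
      have hz : ∑ l, (A i l - c i j * A j l)^2 = 0 := by rw [key, ← h]
      have hall : ∀ l, A i l = c i j * A j l := by
        intro l
        have := (Finset.sum_eq_zero_iff_of_nonneg
          (fun l _ => sq_nonneg (A i l - c i j * A j l))).mp hz l (Finset.mem_univ l)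
        have := sq_eq_zero_iff.mp this
        linarith
      have hc2 : (c i j)^2 = 1 := by linarith
      rcases mul_self_eq_one_iff.mp (by nlinarith : c i j * c i j = 1) with h' | h'
      · exact (hdist i j hij).1 (funext fun l => by rw [hall l, h', one_mul])
      · exact (hdist i j hij).2 (funext fun l => by
          rw [hall l, h']; simp)
  -- the updated matrix-vector product
  have hphi : ∀ i j : Fin m, (kkPhi A i j).mulVec x
      = Function.update a i ((a i - c i j * a j) / Real.sqrt (1 - (c i j)^2)) := by
    intro i j
    funext k
    by_cases hk : k = i
    · subst hk
      simp only [kkPhi, Matrix.mulVec, Matrix.updateRow_self, Function.update_self,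
        dotProduct]
      show ∑ l, (A k l - c k j * A j l) / Real.sqrt (1 - (c k j) ^ 2) * x l
          = (a k - c k j * a j) / Real.sqrt (1 - c k j ^ 2)
      have harith : ∀ l, (A k l - c k j * A j l) / Real.sqrt (1 - c k j ^ 2) * x l
          = (A k l * x l - c k j * (A j l * x l)) / Real.sqrt (1 - c k j ^ 2) := by
        intro l; ring
      rw [Finset.sum_congr rfl fun l _ => harith l, ← Finset.sum_div,
        Finset.sum_sub_distrib, ← Finset.mul_sum]
      rfl
    · simp only [kkPhi, Matrix.mulVec, dotProduct, Matrix.updateRow_ne hk,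
        Function.update_of_ne hk]
      rfl
  set S : ℝ := ∑ i, (a i)^2 with hS
  -- per-pair sum of squares
  have hsum : ∀ i j : Fin m, i ≠ j → ∑ k, ((kkPhi A i j).mulVec x k)^2
      = S - (a i)^2 + (a i - c i j * a j)^2 / (1 - (c i j)^2) := by
    intro i j hij
    rw [hphi i j]
    have hupd : (fun k => (Function.update a i
        ((a i - c i j * a j) / Real.sqrt (1 - (c i j)^2)) k)^2)
        = Function.update (fun k => (a k)^2) i
          (((a i - c i j * a j) / Real.sqrt (1 - (c i j)^2))^2) := by
      funext k
      by_cases hk : k = i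
      · subst hk; simp
      · simp [Function.update_of_ne hk]
    calc ∑ k, (Function.update a i
          ((a i - c i j * a j) / Real.sqrt (1 - (c i j)^2)) k)^2
        = ∑ k, Function.update (fun k => (a k)^2) i
          (((a i - c i j * a j) / Real.sqrt (1 - (c i j)^2))^2) k := by rw [hupd]
      _ = ((a i - c i j * a j) / Real.sqrt (1 - (c i j)^2))^2
            + ∑ k ∈ Finset.univ \ {i}, (a k)^2 :=
          Finset.sum_update_of_mem (Finset.mem_univ i) _ _
      _ = S - (a i)^2 + (a i - c i j * a j)^2 / (1 - (c i j)^2) := by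
          rw [← Finset.erase_eq, Finset.sum_erase_eq_sub (Finset.mem_univ i),
            div_pow, Real.sq_sqrt (by have := hc1 i j hij; linarith)]
          ring
  -- pointwise inequality
  have hpt : ∀ i j : Fin m, i ≠ j →
      S - 2 * (c i j * a i * a j) ≤ ∑ k, ((kkPhi A i j).mulVec x k)^2 := by
    intro i j hij
    rw [hsum i j hij]
    have hc := hc1 i j hij
    have hpos : 0 < 1 - (c i j)^2 := by linarith
    have : (a i)^2 - 2 * (c i j * a i * a j)
        ≤ (a i - c i j * a j)^2 / (1 - (c i j)^2) := by
      rw [le_div_iff₀ hpos]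
      nlinarith [sq_nonneg (c i j * (a i - c i j * a j)), sq_nonneg (c i j * a j),
        mul_nonneg (mul_nonneg (sq_nonneg (c i j)) hpos.le) (sq_nonneg (a j))]
    linarith
  -- cardinality
  have hcard : ∀ i : Fin m, (Finset.univ.filter (fun j => j ≠ i)).card = m - 1 := by
    intro i
    rw [Finset.filter_ne', Finset.card_erase_of_mem (Finset.mem_univ i), Finset.card_univ,
      Fintype.card_fin]
  set Q : ℝ := ∑ i, ∑ j ∈ Finset.univ.filter (fun j => j ≠ i), c i j * a i * a j with hQ
  have hmR : (2:ℝ) ≤ (m:ℝ) := by exact_mod_cast hm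
  have hM : (0:ℝ) < (m:ℝ) * ((m:ℝ) - 1) := by nlinarith
  have hcast : ((m - 1 : ℕ) : ℝ) = (m:ℝ) - 1 := by
    rw [Nat.cast_sub (by omega)]; simp
  -- main summation bound
  have key : (m:ℝ) * ((m:ℝ) - 1) * S - 2 * Q
      ≤ ∑ i : Fin m, ∑ j ∈ Finset.univ.filter (fun j => j ≠ i),
          ∑ k, ((kkPhi A i j).mulVec x k)^2 := by
    have step : ∀ i : Fin m,
        ((m:ℝ) - 1) * S - 2 * ∑ j ∈ Finset.univ.filter (fun j => j ≠ i), c i j * a i * a j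
        ≤ ∑ j ∈ Finset.univ.filter (fun j => j ≠ i),
            ∑ k, ((kkPhi A i j).mulVec x k)^2 := by
      intro i
      have h1 : ∑ j ∈ Finset.univ.filter (fun j => j ≠ i), (S - 2 * (c i j * a i * a j))
          ≤ ∑ j ∈ Finset.univ.filter (fun j => j ≠ i),
              ∑ k, ((kkPhi A i j).mulVec x k)^2 := by
        apply Finset.sum_le_sum
        intro j hj
        exact hpt i j (Finset.mem_filter.mp hj).2.symm
      have h2 : ∑ j ∈ Finset.univ.filter (fun j => j ≠ i), (S - 2 * (c i j * a i * a j))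
          = ((m:ℝ) - 1) * S
            - 2 * ∑ j ∈ Finset.univ.filter (fun j => j ≠ i), c i j * a i * a j := by
        rw [Finset.sum_sub_distrib, Finset.sum_const, hcard i, ← Finset.mul_sum,
          nsmul_eq_mul, hcast]
      linarith
    calc (m:ℝ) * ((m:ℝ) - 1) * S - 2 * Q
        = ∑ i : Fin m, (((m:ℝ) - 1) * S
            - 2 * ∑ j ∈ Finset.univ.filter (fun j => j ≠ i), c i j * a i * a j) := by
          rw [hQ, Finset.sum_sub_distrib, Finset.sum_const, ← Finset.mul_sum,
            Finset.card_univ, Fintype.card_fin, nsmul_eq_mul]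
          ring
      _ ≤ _ := Finset.sum_le_sum fun i _ => step i
  -- identity for ‖AᵀAx‖²
  have hP : ∑ k, (Aᵀ.mulVec a k)^2 = S + Q := by
    have h1 : ∀ k : Fin n, Aᵀ.mulVec a k = ∑ i, A i k * a i := by
      intro k; simp [Matrix.mulVec, dotProduct, Matrix.transpose_apply]
    have h2 : ∑ k, (Aᵀ.mulVec a k)^2 = ∑ i : Fin m, ∑ j : Fin m, c i j * a i * a j := by
      simp only [h1, sq, Finset.sum_mul_sum]
      rw [Finset.sum_comm]
      apply Finset.sum_congr rfl
      intro i _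
      rw [Finset.sum_comm]
      apply Finset.sum_congr rfl
      intro j _
      rw [show c i j = ∑ l, A i l * A j l from rfl, Finset.sum_mul, Finset.sum_mul]
      exact Finset.sum_congr rfl fun k _ => by ring
    rw [h2]
    have h3 : ∀ i : Fin m, ∑ j : Fin m, c i j * a i * a j
        = (a i)^2 + ∑ j ∈ Finset.univ.filter (fun j => j ≠ i), c i j * a i * a j := by
      intro i
      have hcii : c i i = 1 := by
        rw [show c i i = ∑ l, A i l * A i l from rfl, ← hnorm i]
        exact Finset.sum_congr rfl fun l _ => (sq (A i l)).symm
      rw [Finset.filter_ne', ← Finset.add_sum_erase _ _ (Finset.mem_univ i), hcii]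
      ring
    rw [Finset.sum_congr rfl fun i _ => h3 i, Finset.sum_add_distrib]
  rw [ge_iff_le, hP]
  have heq : 1 / ((m:ℝ) * ((m:ℝ) - 1)) *
        (∑ i : Fin m, ∑ j ∈ Finset.univ.filter (fun j => j ≠ i),
          ∑ k, ((kkPhi A i j).mulVec x k)^2)
      - (S + 2 / ((m:ℝ) * ((m:ℝ) - 1)) * (S - (S + Q)))
      = ((∑ i : Fin m, ∑ j ∈ Finset.univ.filter (fun j => j ≠ i),
          ∑ k, ((kkPhi A i j).mulVec x k)^2) - ((m:ℝ) * ((m:ℝ) - 1) * S - 2 * Q))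
        / ((m:ℝ) * ((m:ℝ) - 1)) := by
    have hm1 : (m:ℝ) - 1 ≠ 0 := by linarith
    field_simp
    ring
  have : 0 ≤ 1 / ((m:ℝ) * ((m:ℝ) - 1)) *
        (∑ i : Fin m, ∑ j ∈ Finset.univ.filter (fun j => j ≠ i),
          ∑ k, ((kkPhi A i j).mulVec x k)^2)
      - (S + 2 / ((m:ℝ) * ((m:ℝ) - 1)) * (S - (S + Q))) := by
    rw [heq]
    exact div_nonneg (by linarith) hM.le
  linarith
end

section
/- Let A ∈ ℝ^{m×n} (m ≥ 2) have rows A_1,…,A_m with ‖A_i‖ = 1 for all i and A_i ≠ ±A_j for i ≠ j. Then for every x ∈ ℝ^n, (1/(m(m−1))) · Σ_{i≠j} ‖φ_{i,j}(A) x‖² = ‖Ax‖² + (1/(m(m−1))) · Σ_{i≠j} [ −⟨A_i,x⟩² + (⟨A_i,x⟩ − ⟨A_i,A_j⟩⟨A_j,x⟩)² / (1 − ⟨A_i,A_j⟩²) ]. -/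
open Finset Matrix

lemma kk_c_sq_lt_one {m n : ℕ} (A : Matrix (Fin m) (Fin n) ℝ) (i j : Fin m)
    (hi : ∑ k, (A i k)^2 = 1) (hj : ∑ k, (A j k)^2 = 1)
    (hne : A i ≠ A j) (hne' : A i ≠ -A j) :
    (∑ l, A i l * A j l)^2 < 1 := by
  have h1 : 0 < ∑ l, (A i l - A j l)^2 := by
    rcases Function.ne_iff.mp hne with ⟨l, hl⟩
    refine Finset.sum_pos' (fun l _ => sq_nonneg _) ⟨l, Finset.mem_univ l, ?_⟩
    exact pow_pos (abs_pos.mpr (sub_ne_zero.mpr hl)) 2 |>.trans_le (le_of_eq (by rw [sq_abs]))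
  have h2 : 0 < ∑ l, (A i l + A j l)^2 := by
    have hne2 : ∃ l, A i l ≠ -A j l := by
      by_contra h
      push_neg at h
      exact hne' (funext h)
    rcases hne2 with ⟨l, hl⟩
    refine Finset.sum_pos' (fun l _ => sq_nonneg _) ⟨l, Finset.mem_univ l, ?_⟩
    have : A i l + A j l ≠ 0 := fun h => hl (by linarith)
    exact pow_pos (abs_pos.mpr this) 2 |>.trans_le (le_of_eq (by rw [sq_abs]))
  have e1 : ∑ l, (A i l - A j l)^2 = 2 - 2 * ∑ l, A i l * A j l := by
    have h : ∀ l ∈ Finset.univ, (A i l - A j l)^2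
        = (A i l ^ 2 + A j l ^ 2) - 2 * (A i l * A j l) := fun l _ => by ring
    rw [Finset.sum_congr rfl h, Finset.sum_sub_distrib, Finset.sum_add_distrib, hi, hj,
      ← Finset.mul_sum]
    norm_num
  have e2 : ∑ l, (A i l + A j l)^2 = 2 + 2 * ∑ l, A i l * A j l := by
    have h : ∀ l ∈ Finset.univ, (A i l + A j l)^2
        = (A i l ^ 2 + A j l ^ 2) + 2 * (A i l * A j l) := fun l _ => by ring
    rw [Finset.sum_congr rfl h, Finset.sum_add_distrib, Finset.sum_add_distrib, hi, hj,
      ← Finset.mul_sum]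
    norm_num
  rw [e1] at h1; rw [e2] at h2
  nlinarith [sq_nonneg (∑ l, A i l * A j l)]

lemma kk_key {m n : ℕ} (A : Matrix (Fin m) (Fin n) ℝ)
    (hnorm : ∀ i, ∑ k, (A i k) ^ 2 = 1)
    (hdist : ∀ i j, i ≠ j → A i ≠ A j ∧ A i ≠ -A j)
    (x : Fin n → ℝ) (i j : Fin m) (hij : j ≠ i) :
    ∑ k, ((kkPhi A i j).mulVec x k) ^ 2
      = (∑ k, (A.mulVec x k) ^ 2) +
        (-(∑ k, A i k * x k) ^ 2 +
          ((∑ k, A i k * x k) - (∑ l, A i l * A j l) * (∑ k, A j k * x k)) ^ 2 /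
            (1 - (∑ l, A i l * A j l) ^ 2)) := by
  set c : ℝ := ∑ l, A i l * A j l with hc
  obtain ⟨h1, h2⟩ := hdist i j (Ne.symm hij)
  have hlt : c^2 < 1 := kk_c_sq_lt_one A i j (hnorm i) (hnorm j) h1 h2
  have hpos : 0 < 1 - c^2 := by linarith
  have hs : Real.sqrt (1 - c^2) ^ 2 = 1 - c^2 := Real.sq_sqrt hpos.le
  have hsne : Real.sqrt (1 - c^2) ≠ 0 := by positivity
  have hrow : ∀ k, k ≠ i → (kkPhi A i j) k = A k := fun k hk =>
    Matrix.updateRow_ne hk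
  have hrowi : (kkPhi A i j) i = fun k =>
      (A i k - c * A j k) / Real.sqrt (1 - c^2) := Matrix.updateRow_self
  have hmv : ∀ k, k ≠ i → (kkPhi A i j).mulVec x k = A.mulVec x k := by
    intro k hk
    simp [Matrix.mulVec, dotProduct, hrow k hk]
  have hmvi : (kkPhi A i j).mulVec x i
      = ((∑ k, A i k * x k) - c * (∑ k, A j k * x k)) / Real.sqrt (1 - c^2) := by
    simp only [Matrix.mulVec, dotProduct, hrowi]
    have h : ∀ l ∈ Finset.univ, (A i l - c * A j l) / Real.sqrt (1 - c^2) * x l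
        = ((A i l * x l) - c * (A j l * x l)) / Real.sqrt (1 - c^2) := fun l _ => by ring
    rw [Finset.sum_congr rfl h, ← Finset.sum_div, Finset.sum_sub_distrib, ← Finset.mul_sum]
  have hAi : A.mulVec x i = ∑ k, A i k * x k := by
    simp [Matrix.mulVec, dotProduct]
  have hdiff : ∑ k, ((kkPhi A i j).mulVec x k) ^ 2 - ∑ k, (A.mulVec x k) ^ 2
      = ((kkPhi A i j).mulVec x i)^2 - (A.mulVec x i)^2 := by
    rw [← Finset.sum_sub_distrib]
    apply Finset.sum_eq_single
    · intro k _ hk; rw [hmv k hk]; ring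
    · intro h; exact absurd (Finset.mem_univ i) h
  have hsq : ((kkPhi A i j).mulVec x i)^2
      = ((∑ k, A i k * x k) - c * (∑ k, A j k * x k)) ^ 2 / (1 - c^2) := by
    rw [hmvi, div_pow, hs]
  rw [hsq, hAi] at hdiff
  linarith

theorem kaczmarz_kac_expectation_identity {m n : ℕ} (hm : 2 ≤ m)
    (A : Matrix (Fin m) (Fin n) ℝ)
    (hnorm : ∀ i, ∑ k, (A i k) ^ 2 = 1)
    (hdist : ∀ i j, i ≠ j → A i ≠ A j ∧ A i ≠ -A j)
    (x : Fin n → ℝ) :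
    (1 / ((m : ℝ) * ((m : ℝ) - 1))) *
        ∑ i : Fin m, ∑ j ∈ Finset.univ.filter (fun j => j ≠ i),
          ∑ k, ((kkPhi A i j).mulVec x k) ^ 2
      = (∑ k, (A.mulVec x k) ^ 2) +
        (1 / ((m : ℝ) * ((m : ℝ) - 1))) *
          ∑ i : Fin m, ∑ j ∈ Finset.univ.filter (fun j => j ≠ i),
            (-(∑ k, A i k * x k) ^ 2 +
              ((∑ k, A i k * x k) - (∑ l, A i l * A j l) * (∑ k, A j k * x k)) ^ 2 /
                (1 - (∑ l, A i l * A j l) ^ 2)) := by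
  have hcard : ∀ i : Fin m, (Finset.univ.filter (fun j => j ≠ i)).card = m - 1 := by
    intro i
    rw [Finset.filter_ne', Finset.card_erase_of_mem (Finset.mem_univ i), Finset.card_univ,
      Fintype.card_fin]
  have hm1 : (1:ℝ) ≤ m := by exact_mod_cast Nat.one_le_of_lt hm
  have hmne : (m : ℝ) * ((m : ℝ) - 1) ≠ 0 := by
    have : (2:ℝ) ≤ m := by exact_mod_cast hm
    nlinarith
  have hsum : ∑ i : Fin m, ∑ j ∈ Finset.univ.filter (fun j => j ≠ i),
      ∑ k, ((kkPhi A i j).mulVec x k) ^ 2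
      = (m : ℝ) * ((m : ℝ) - 1) * (∑ k, (A.mulVec x k) ^ 2) +
        ∑ i : Fin m, ∑ j ∈ Finset.univ.filter (fun j => j ≠ i),
          (-(∑ k, A i k * x k) ^ 2 +
            ((∑ k, A i k * x k) - (∑ l, A i l * A j l) * (∑ k, A j k * x k)) ^ 2 /
              (1 - (∑ l, A i l * A j l) ^ 2)) := by
    have hconst : ∑ i : Fin m, ∑ _j ∈ Finset.univ.filter (fun j => j ≠ i),
        (∑ k, (A.mulVec x k) ^ 2)
        = (m : ℝ) * ((m : ℝ) - 1) * (∑ k, (A.mulVec x k) ^ 2) := by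
      simp only [Finset.sum_const, hcard, nsmul_eq_mul, Finset.card_univ, Fintype.card_fin]
      rw [Nat.cast_sub (Nat.one_le_of_lt hm)]
      push_cast
      ring
    rw [← hconst, ← Finset.sum_add_distrib]
    apply Finset.sum_congr rfl
    intro i _
    rw [← Finset.sum_add_distrib]
    apply Finset.sum_congr rfl
    intro j hj
    rw [Finset.mem_filter] at hj
    exact kk_key A hnorm hdist x i j hj.2
  rw [hsum, mul_add, ← mul_assoc, one_div_mul_cancel hmne, one_mul]
end

section
/- Let A ∈ ℝ^{m×n} have rows A_1,…,A_m with ‖A_i‖ = 1 for all i and A_i ≠ ±A_j for i ≠ j. Then for every x ∈ ℝ^n, Σ_{i≠j} [ −⟨A_i,x⟩² + (⟨A_i,x⟩ − ⟨A_i,A_j⟩⟨A_j,x⟩)² / (1 − ⟨A_i,A_j⟩²) ] ≥ 2( ‖Ax‖² − ‖AᵀAx‖² ). -/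
open Finset Matrix

lemma dot_lt_one {n : ℕ} (v w : Fin n → ℝ) (hv : ∑ k, (v k)^2 = 1)
    (hw : ∑ k, (w k)^2 = 1) (hne : v ≠ w) : ∑ l, v l * w l < 1 := by
  have hexp : ∑ l, (v l - w l)^2 = 2 - 2 * ∑ l, v l * w l := by
    have : ∀ l : Fin n, (v l - w l)^2 = (v l)^2 + (w l)^2 - 2 * (v l * w l) := by
      intro l; ring
    rw [Finset.sum_congr rfl (fun l _ => this l)]
    rw [Finset.sum_sub_distrib, Finset.sum_add_distrib, hv, hw, ← Finset.mul_sum]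
    ring
  have hz : ∑ l, (v l - w l)^2 ≠ 0 := by
    intro h
    apply hne; funext l
    have h0 := (Finset.sum_eq_zero_iff_of_nonneg
      (fun l _ => sq_nonneg (v l - w l))).mp h l (Finset.mem_univ l)
    have := sq_eq_zero_iff.mp h0
    linarith
  have hpos : 0 < ∑ l, (v l - w l)^2 :=
    lt_of_le_of_ne (Finset.sum_nonneg fun l _ => sq_nonneg _) (Ne.symm hz)
  linarith

theorem kaczmarz_kac_sigma_lower_bound {m n : ℕ}
    (A : Matrix (Fin m) (Fin n) ℝ)
    (hnorm : ∀ i, ∑ k, (A i k) ^ 2 = 1)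
    (hdist : ∀ i j, i ≠ j → A i ≠ A j ∧ A i ≠ -A j)
    (x : Fin n → ℝ) :
    ∑ i : Fin m, ∑ j ∈ Finset.univ.filter (fun j => j ≠ i),
        (-(∑ k, A i k * x k) ^ 2 +
          ((∑ k, A i k * x k) - (∑ l, A i l * A j l) * (∑ k, A j k * x k)) ^ 2 /
            (1 - (∑ l, A i l * A j l) ^ 2))
      ≥ 2 * ((∑ k, (A.mulVec x k) ^ 2) - ∑ k, (Aᵀ.mulVec (A.mulVec x) k) ^ 2) := by
  set c : Fin m → ℝ := fun i => ∑ k, A i k * x k with hc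
  set g : Fin m → Fin m → ℝ := fun i j => ∑ l, A i l * A j l with hg
  -- |g i j| < 1 for i ≠ j
  have hg1 : ∀ i j, i ≠ j → g i j < 1 := by
    intro i j hij
    exact dot_lt_one (A i) (A j) (hnorm i) (hnorm j) ((hdist i j hij).1)
  have hg2 : ∀ i j, i ≠ j → -1 < g i j := by
    intro i j hij
    have := dot_lt_one (A i) (-A j) (hnorm i) (by simpa using hnorm j) ((hdist i j hij).2)
    have h2 : ∑ l, A i l * (-A j) l = -(g i j) := by
      simp [hg, ← Finset.sum_neg_distrib]
    rw [h2] at this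
    linarith
  -- g i i = 1
  have hgii : ∀ i, g i i = 1 := by
    intro i
    have := hnorm i
    simpa [hg, sq] using this
  -- rewrite RHS pieces
  have h1 : ∑ k, (A.mulVec x k) ^ 2 = ∑ i, (c i)^2 := by
    apply Finset.sum_congr rfl
    intro i _
    simp [Matrix.mulVec, dotProduct, hc]
  have h2 : ∑ k, (Aᵀ.mulVec (A.mulVec x) k) ^ 2 = ∑ i, ∑ j, g i j * (c i * c j) := by
    have hAv : A.mulVec x = c := by funext i; simp [Matrix.mulVec, dotProduct, hc]
    rw [hAv]
    have : ∀ k : Fin n, (Aᵀ.mulVec c) k = ∑ i, A i k * c i := by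
      intro k; simp [Matrix.mulVec, dotProduct, Matrix.transpose_apply]
    calc ∑ k, (Aᵀ.mulVec c k)^2 = ∑ k : Fin n, ∑ i : Fin m, ∑ j : Fin m,
            (A i k * c i) * (A j k * c j) := by
          apply Finset.sum_congr rfl; intro k _
          rw [this k, sq, Finset.sum_mul_sum]
      _ = ∑ i : Fin m, ∑ j : Fin m, ∑ k : Fin n, (A i k * c i) * (A j k * c j) := by
          rw [Finset.sum_comm]
          apply Finset.sum_congr rfl; intro i _
          rw [Finset.sum_comm]
      _ = ∑ i, ∑ j, g i j * (c i * c j) := by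
          apply Finset.sum_congr rfl; intro i _
          apply Finset.sum_congr rfl; intro j _
          rw [hg, Finset.sum_mul]
          apply Finset.sum_congr rfl; intro k _
          ring
  rw [h1, h2]
  -- split diagonal
  have hsplit : ∑ i, ∑ j, g i j * (c i * c j)
      = ∑ i, (c i)^2 + ∑ i : Fin m, ∑ j ∈ Finset.univ.filter (fun j => j ≠ i),
          g i j * (c i * c j) := by
    rw [← Finset.sum_add_distrib]
    apply Finset.sum_congr rfl
    intro i _
    rw [Finset.filter_ne', ← Finset.add_sum_erase _ _ (Finset.mem_univ i), hgii i]
    ring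
  rw [hsplit]
  have key : ∀ i j, j ≠ i →
      -2 * (g i j * (c i * c j)) ≤
        -(c i)^2 + (c i - g i j * c j)^2 / (1 - (g i j)^2) := by
    intro i j hji
    have hlt1 := hg1 i j (Ne.symm hji)
    have hlt2 := hg2 i j (Ne.symm hji)
    have hpos : 0 < 1 - (g i j)^2 := by nlinarith
    have hdiv : (c i)^2 - 2 * g i j * (c i * c j) ≤ (c i - g i j * c j)^2 / (1 - (g i j)^2) := by
      rw [le_div_iff₀ hpos]
      nlinarith [mul_nonneg (by linarith : (0:ℝ) ≤ 1 - g i j) (sq_nonneg (g i j * (c i + c j))),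
        mul_nonneg (by linarith : (0:ℝ) ≤ 1 + g i j) (sq_nonneg (g i j * (c i - c j)))]
    linarith
  calc 2 * (∑ i, (c i)^2 - (∑ i, (c i)^2 + ∑ i : Fin m,
          ∑ j ∈ Finset.univ.filter (fun j => j ≠ i), g i j * (c i * c j)))
      = ∑ i : Fin m, ∑ j ∈ Finset.univ.filter (fun j => j ≠ i),
          (-2 * (g i j * (c i * c j))) := by
        have e : (∑ i : Fin m, ∑ j ∈ Finset.univ.filter (fun j => j ≠ i),
            (-2 * (g i j * (c i * c j))))
            = -2 * ∑ i : Fin m, ∑ j ∈ Finset.univ.filter (fun j => j ≠ i),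
                g i j * (c i * c j) := by
          simp [Finset.mul_sum]
        rw [e]; ring
    _ ≤ ∑ i : Fin m, ∑ j ∈ Finset.univ.filter (fun j => j ≠ i),
          (-(c i)^2 + (c i - g i j * c j)^2 / (1 - (g i j)^2)) := by
        apply Finset.sum_le_sum
        intro i _
        apply Finset.sum_le_sum
        intro j hj
        exact key i j (Finset.mem_filter.mp hj).2
end

section
/- Let A ∈ ℝ^{m×n} have rows A_1,…,A_m with ‖A_i‖ = 1 for all i. Then for every x ∈ ℝ^n, Σ_{i≠j} [ −⟨A_i,x⟩² + (⟨A_i,x⟩ − ⟨A_i,A_j⟩⟨A_j,x⟩)² ] ≥ 2( ‖Ax‖² − ‖AᵀAx‖² ), where the sum runs over ordered pairs (i,j) with i ≠ j. -/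
open Finset Matrix

theorem kaczmarz_kac_sigma_lower_bound_no_denominator {m n : ℕ}
    (A : Matrix (Fin m) (Fin n) ℝ)
    (hnorm : ∀ i, ∑ k, (A i k) ^ 2 = 1)
    (x : Fin n → ℝ) :
    ∑ i : Fin m, ∑ j ∈ Finset.univ.filter (fun j => j ≠ i),
        (-(∑ k, A i k * x k) ^ 2 +
          ((∑ k, A i k * x k) - (∑ l, A i l * A j l) * (∑ k, A j k * x k)) ^ 2)
      ≥ 2 * ((∑ k, (A.mulVec x k) ^ 2) - ∑ k, (Aᵀ.mulVec (A.mulVec x) k) ^ 2) := by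
  set y : Fin m → ℝ := fun i => ∑ k, A i k * x k with hy
  set G : Fin m → Fin m → ℝ := fun i j => ∑ l, A i l * A j l with hG
  have hGii : ∀ i, G i i = 1 := by
    intro i
    have := hnorm i
    simp only [hG]
    calc ∑ l, A i l * A i l = ∑ l, (A i l) ^ 2 := by
          refine Finset.sum_congr rfl fun l _ => by ring
      _ = 1 := hnorm i
  have h1 : ∑ k, (A.mulVec x k) ^ 2 = ∑ i, (y i) ^ 2 := by
    refine Finset.sum_congr rfl fun i _ => ?_
    simp [Matrix.mulVec, dotProduct, hy]
  have h2 : ∑ k, (Aᵀ.mulVec (A.mulVec x) k) ^ 2 = ∑ i, ∑ j, G i j * (y i * y j) := by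
    have hk : ∀ k, Aᵀ.mulVec (A.mulVec x) k = ∑ i, A i k * y i := by
      intro k
      simp [Matrix.mulVec, dotProduct, Matrix.transpose_apply, hy]
    calc ∑ k, (Aᵀ.mulVec (A.mulVec x) k) ^ 2
        = ∑ k, ∑ i, ∑ j, (A i k * y i) * (A j k * y j) := by
          refine Finset.sum_congr rfl fun k _ => ?_
          rw [hk, sq, Finset.sum_mul_sum]
      _ = ∑ i, ∑ k, ∑ j, (A i k * y i) * (A j k * y j) := Finset.sum_comm
      _ = ∑ i, ∑ j, ∑ k, (A i k * y i) * (A j k * y j) := by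
          exact Finset.sum_congr rfl fun i _ => Finset.sum_comm
      _ = ∑ i, ∑ j, G i j * (y i * y j) := by
          refine Finset.sum_congr rfl fun i _ => Finset.sum_congr rfl fun j _ => ?_
          simp only [hG]
          rw [Finset.sum_mul]
          refine Finset.sum_congr rfl fun k _ => by ring
  have hsplit : ∀ i : Fin m, ∑ j, G i j * (y i * y j)
      = (y i) ^ 2 + ∑ j ∈ Finset.univ.filter (fun j => j ≠ i), G i j * (y i * y j) := by
    intro i
    rw [Finset.filter_ne', ← Finset.add_sum_erase _ _ (Finset.mem_univ i), hGii]
    congr 1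
    ring
  have hterm : ∀ i j : Fin m,
      (-(y i) ^ 2 + ((y i) - G i j * (y j)) ^ 2)
        = -2 * (G i j * (y i * y j)) + (G i j) ^ 2 * (y j) ^ 2 := by
    intro i j; ring
  have hLHS : ∑ i : Fin m, ∑ j ∈ Finset.univ.filter (fun j => j ≠ i),
        (-(y i) ^ 2 + ((y i) - G i j * (y j)) ^ 2)
      = (∑ i : Fin m, ∑ j ∈ Finset.univ.filter (fun j => j ≠ i),
          (-2 * (G i j * (y i * y j))))
        + ∑ i : Fin m, ∑ j ∈ Finset.univ.filter (fun j => j ≠ i),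
          (G i j) ^ 2 * (y j) ^ 2 := by
    rw [← Finset.sum_add_distrib]
    refine Finset.sum_congr rfl fun i _ => ?_
    rw [← Finset.sum_add_distrib]
    exact Finset.sum_congr rfl fun j _ => hterm i j
  have hnonneg : 0 ≤ ∑ i : Fin m, ∑ j ∈ Finset.univ.filter (fun j => j ≠ i),
      (G i j) ^ 2 * (y j) ^ 2 := by
    refine Finset.sum_nonneg fun i _ => Finset.sum_nonneg fun j _ => ?_
    positivity
  have h2' : ∑ i, ∑ j, G i j * (y i * y j)
      = (∑ i, (y i) ^ 2) + ∑ i : Fin m, ∑ j ∈ Finset.univ.filter (fun j => j ≠ i),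
          G i j * (y i * y j) := by
    rw [← Finset.sum_add_distrib]
    exact Finset.sum_congr rfl fun i _ => hsplit i
  rw [h1, h2, h2']
  rw [show (∑ i : Fin m, ∑ j ∈ Finset.univ.filter (fun j => j ≠ i),
        (-(∑ k, A i k * x k) ^ 2 +
          ((∑ k, A i k * x k) - (∑ l, A i l * A j l) * (∑ k, A j k * x k)) ^ 2))
      = ∑ i : Fin m, ∑ j ∈ Finset.univ.filter (fun j => j ≠ i),
        (-(y i) ^ 2 + ((y i) - G i j * (y j)) ^ 2) from rfl]
  rw [hLHS]
  have : ∑ i : Fin m, ∑ j ∈ Finset.univ.filter (fun j => j ≠ i),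
      (-2 * (G i j * (y i * y j)))
      = -2 * ∑ i : Fin m, ∑ j ∈ Finset.univ.filter (fun j => j ≠ i),
          G i j * (y i * y j) := by
    rw [Finset.mul_sum]
    exact Finset.sum_congr rfl fun i _ => by rw [Finset.mul_sum]
  linarith [hnonneg, this]
end

section
/- Let A ∈ ℝ^{m×n} (m ≥ 2) have rows A_1,…,A_m with ‖A_i‖ = 1 for all i and A_i ≠ ±A_j for i ≠ j. Then for every x ∈ ℝ^n, (1/(m(m−1))) · Σ_{i≠j} ‖φ_{i,j}(A) x‖² ≥ ‖Ax‖² + (1/(m(m−1))) · Σ_{i≠j} [ −⟨A_i,x⟩² + (⟨A_i,x⟩ − ⟨A_i,A_j⟩⟨A_j,x⟩)² · (1 + ⟨A_i,A_j⟩²) ]. -/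
open Finset Matrix

lemma kk_inner_sq_lt_one {n : ℕ} (u v : Fin n → ℝ) (hu : ∑ k, u k ^ 2 = 1)
    (hv : ∑ k, v k ^ 2 = 1) (h1 : u ≠ v) (h2 : u ≠ -v) :
    (∑ l, u l * v l) ^ 2 < 1 := by
  set t := ∑ l, u l * v l with ht
  have hexp : ∑ k, (u k - t * v k) ^ 2 = 1 - t ^ 2 := by
    have h : ∀ k ∈ Finset.univ, (u k - t * v k) ^ 2
        = u k ^ 2 - (2 * t) * (u k * v k) + t ^ 2 * v k ^ 2 := by
      intro k _; ring
    rw [Finset.sum_congr rfl h, Finset.sum_add_distrib, Finset.sum_sub_distrib,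
      ← Finset.mul_sum, ← Finset.mul_sum, hu, hv, ← ht]
    ring
  have hnn : 0 ≤ ∑ k, (u k - t * v k) ^ 2 := Finset.sum_nonneg fun k _ => sq_nonneg _
  by_contra hcon
  push_neg at hcon
  have h0 : ∑ k, (u k - t * v k) ^ 2 = 0 := le_antisymm (by rw [hexp]; linarith) hnn
  have heq : ∀ k, u k = t * v k := by
    intro k
    have := (Finset.sum_eq_zero_iff_of_nonneg (fun k _ => sq_nonneg _)).1 h0 k (Finset.mem_univ k)
    nlinarith [this]
  have ht2 : t ^ 2 = 1 := by rw [hexp] at h0; linarith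
  have hcases : (t - 1) * (t + 1) = 0 := by nlinarith
  rcases mul_eq_zero.1 hcases with h | h
  · have ht1 : t = 1 := by linarith
    exact h1 (funext fun k => by rw [heq k, ht1, one_mul])
  · have ht1 : t = -1 := by linarith
    exact h2 (funext fun k => by rw [heq k, ht1]; simp)

lemma kk_pair_bound {m n : ℕ} (A : Matrix (Fin m) (Fin n) ℝ)
    (hnorm : ∀ i, ∑ k, (A i k) ^ 2 = 1)
    (hdist : ∀ i j, i ≠ j → A i ≠ A j ∧ A i ≠ -A j)
    (x : Fin n → ℝ) (i j : Fin m) (hij : j ≠ i) :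
    (∑ k, (A.mulVec x k) ^ 2) +
      (-(∑ k, A i k * x k) ^ 2 +
        ((∑ k, A i k * x k) - (∑ l, A i l * A j l) * (∑ k, A j k * x k)) ^ 2 *
          (1 + (∑ l, A i l * A j l) ^ 2))
    ≤ ∑ k, ((kkPhi A i j).mulVec x k) ^ 2 := by
  set t := ∑ l, A i l * A j l with ht
  set a := ∑ k, A i k * x k with ha
  set b := ∑ k, A j k * x k with hb
  have ht1 : t ^ 2 < 1 :=
    kk_inner_sq_lt_one (A i) (A j) (hnorm i) (hnorm j)
      (hdist i j (Ne.symm hij)).1 (hdist i j (Ne.symm hij)).2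
  have hpos : (0 : ℝ) < 1 - t ^ 2 := by linarith
  set s := Real.sqrt (1 - t ^ 2) with hs
  have hs0 : 0 < s := Real.sqrt_pos.2 hpos
  have hs2 : s ^ 2 = 1 - t ^ 2 := Real.sq_sqrt (le_of_lt hpos)
  have hφ : ∀ k, ((kkPhi A i j).mulVec x) k
      = if k = i then (a - t * b) / s else (A.mulVec x) k := by
    intro k
    by_cases hk : k = i
    · subst hk
      simp only [kkPhi, Matrix.mulVec, dotProduct, Matrix.updateRow_apply, if_pos rfl,
        if_true]
      rw [ha, hb, ← ht, ← hs, eq_div_iff hs0.ne', Finset.sum_mul]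
      rw [Finset.sum_congr rfl (fun l _ => by field_simp :
        ∀ l ∈ Finset.univ, (A k l - t * A j l) / s * x l * s
          = A k l * x l - t * (A j l * x l))]
      rw [Finset.sum_sub_distrib, ← Finset.mul_sum]
    · simp [kkPhi, Matrix.mulVec, dotProduct, Matrix.updateRow_apply, hk]
  have hAi : (A.mulVec x) i = a := rfl
  have split1 : ∑ k, ((kkPhi A i j).mulVec x k) ^ 2
      = ((a - t * b) / s) ^ 2 + ∑ k ∈ Finset.univ.erase i, (A.mulVec x k) ^ 2 := by
    rw [← Finset.add_sum_erase _ _ (Finset.mem_univ i)]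
    congr 1
    · rw [hφ i, if_pos rfl]
    · apply Finset.sum_congr rfl
      intro k hk
      rw [hφ k, if_neg (Finset.ne_of_mem_erase hk)]
  have split2 : ∑ k, (A.mulVec x k) ^ 2
      = a ^ 2 + ∑ k ∈ Finset.univ.erase i, (A.mulVec x k) ^ 2 := by
    rw [← Finset.add_sum_erase _ _ (Finset.mem_univ i), hAi]
  rw [split1, split2]
  have key : (a - t * b) ^ 2 * (1 + t ^ 2) ≤ ((a - t * b) / s) ^ 2 := by
    rw [div_pow, hs2, le_div_iff₀ hpos]
    nlinarith [sq_nonneg (a - t * b), sq_nonneg t, sq_nonneg (t ^ 2)]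
  linarith

theorem kaczmarz_kac_expectation_refined_bound {m n : ℕ} (hm : 2 ≤ m)
    (A : Matrix (Fin m) (Fin n) ℝ)
    (hnorm : ∀ i, ∑ k, (A i k) ^ 2 = 1)
    (hdist : ∀ i j, i ≠ j → A i ≠ A j ∧ A i ≠ -A j)
    (x : Fin n → ℝ) :
    (1 / ((m : ℝ) * ((m : ℝ) - 1))) *
        ∑ i : Fin m, ∑ j ∈ Finset.univ.filter (fun j => j ≠ i),
          ∑ k, ((kkPhi A i j).mulVec x k) ^ 2
      ≥ (∑ k, (A.mulVec x k) ^ 2) +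
        (1 / ((m : ℝ) * ((m : ℝ) - 1))) *
          ∑ i : Fin m, ∑ j ∈ Finset.univ.filter (fun j => j ≠ i),
            (-(∑ k, A i k * x k) ^ 2 +
              ((∑ k, A i k * x k) - (∑ l, A i l * A j l) * (∑ k, A j k * x k)) ^ 2 *
                (1 + (∑ l, A i l * A j l) ^ 2)) := by
  set S := ∑ k, (A.mulVec x k) ^ 2 with hS
  set e : Fin m → Fin m → ℝ := fun i j =>
    (-(∑ k, A i k * x k) ^ 2 +
      ((∑ k, A i k * x k) - (∑ l, A i l * A j l) * (∑ k, A j k * x k)) ^ 2 *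
        (1 + (∑ l, A i l * A j l) ^ 2)) with he
  have hmpos : (0 : ℝ) < (m : ℝ) * ((m : ℝ) - 1) := by
    have h2 : (2 : ℝ) ≤ (m : ℝ) := by exact_mod_cast hm
    nlinarith
  have hcard : ∀ i : Fin m, (Finset.univ.filter (fun j => j ≠ i)).card = m - 1 := by
    intro i
    rw [Finset.filter_ne', Finset.card_erase_of_mem (Finset.mem_univ i), Finset.card_univ,
      Fintype.card_fin]
  have hconst : ∀ i : Fin m, ∑ _j ∈ Finset.univ.filter (fun j => j ≠ i), S
      = ((m : ℝ) - 1) * S := by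
    intro i
    rw [Finset.sum_const, hcard i, nsmul_eq_mul]
    congr 1
    rw [Nat.cast_sub (by omega), Nat.cast_one]
  have hsplit : ∑ i : Fin m, ∑ j ∈ Finset.univ.filter (fun j => j ≠ i), (S + e i j)
      = (m : ℝ) * ((m : ℝ) - 1) * S
        + ∑ i : Fin m, ∑ j ∈ Finset.univ.filter (fun j => j ≠ i), e i j := by
    simp_rw [Finset.sum_add_distrib, hconst]
    rw [Finset.sum_const, Finset.card_univ, Fintype.card_fin, nsmul_eq_mul]
    ring
  have hsum : (m : ℝ) * ((m : ℝ) - 1) * S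
        + ∑ i : Fin m, ∑ j ∈ Finset.univ.filter (fun j => j ≠ i), e i j
      ≤ ∑ i : Fin m, ∑ j ∈ Finset.univ.filter (fun j => j ≠ i),
          ∑ k, ((kkPhi A i j).mulVec x k) ^ 2 := by
    rw [← hsplit]
    refine Finset.sum_le_sum fun i _ => Finset.sum_le_sum fun j hj => ?_
    exact kk_pair_bound A hnorm hdist x i j (Finset.mem_filter.1 hj).2
  have hmul := mul_le_mul_of_nonneg_left hsum (le_of_lt (one_div_pos.2 hmpos))
  have hrw : (1 / ((m : ℝ) * ((m : ℝ) - 1))) *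
      ((m : ℝ) * ((m : ℝ) - 1) * S
        + ∑ i : Fin m, ∑ j ∈ Finset.univ.filter (fun j => j ≠ i), e i j)
      = S + (1 / ((m : ℝ) * ((m : ℝ) - 1))) *
          ∑ i : Fin m, ∑ j ∈ Finset.univ.filter (fun j => j ≠ i), e i j := by
    rw [mul_add, ← mul_assoc, one_div_mul_cancel hmpos.ne']
    ring
  rw [hrw] at hmul
  exact hmul
end

section
/- Let A ∈ ℝ^{m×n} (m ≥ 2) have rows A_1,…,A_m with ‖A_i‖ = 1 for all i and A_i ≠ ±A_j for i ≠ j. Let v ∈ ℝ^n with ‖v‖ = 1 be an eigenvector of AᵀA with eigenvalue λ satisfying 0 < λ < 1. Then (1/(m(m−1))) · Σ_{i≠j} ‖φ_{i,j}(A) v‖² ≥ λ + (2/(m(m−1)))(λ − λ²) > λ. -/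
open Finset Matrix

theorem kaczmarz_kac_grows_small_singular_directions {m n : ℕ} (hm : 2 ≤ m)
    (A : Matrix (Fin m) (Fin n) ℝ)
    (hnorm : ∀ i, ∑ k, (A i k) ^ 2 = 1)
    (hdist : ∀ i j, i ≠ j → A i ≠ A j ∧ A i ≠ -A j)
    (v : Fin n → ℝ) (hv : ∑ k, (v k) ^ 2 = 1)
    (lam : ℝ) (hlam0 : 0 < lam) (hlam1 : lam < 1)
    (heig : (Aᵀ * A).mulVec v = lam • v) :
    (1 / ((m : ℝ) * ((m : ℝ) - 1))) *
        ∑ i : Fin m, ∑ j ∈ Finset.univ.filter (fun j => j ≠ i),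
          ∑ k, ((kkPhi A i j).mulVec v k) ^ 2
      ≥ lam + (2 / ((m : ℝ) * ((m : ℝ) - 1))) * (lam - lam ^ 2) ∧
    lam + (2 / ((m : ℝ) * ((m : ℝ) - 1))) * (lam - lam ^ 2) > lam := by
  have hm2 : (2:ℝ) ≤ (m:ℝ) := by exact_mod_cast hm
  have hMpos : (0:ℝ) < (m:ℝ) * ((m:ℝ) - 1) := by nlinarith
  set c : Fin m → ℝ := fun i => ∑ k, A i k * v k with hcdef
  set g : Fin m → Fin m → ℝ := fun i j => ∑ l, A i l * A j l with hgdef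
  have hgii : ∀ i, g i i = 1 := by
    intro i
    simpa [hgdef, pow_two] using hnorm i
  -- the row relation from the eigenvector equation
  have hrow : ∀ k, ∑ j, A j k * c j = lam * v k := by
    intro k
    have h := congrFun heig k
    simp only [Matrix.mulVec, dotProduct, Matrix.mul_apply, Matrix.transpose_apply,
      Pi.smul_apply, smul_eq_mul] at h
    calc ∑ j, A j k * c j = ∑ j, ∑ l, A j k * A j l * v l := by
          apply Finset.sum_congr rfl
          intro j _
          simp only [hcdef, Finset.mul_sum, mul_assoc]
      _ = ∑ l, ∑ j, A j k * A j l * v l := Finset.sum_comm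
      _ = ∑ l, (∑ j, A j k * A j l) * v l := by
          apply Finset.sum_congr rfl
          intro l _
          rw [Finset.sum_mul]
      _ = lam * v k := h
  have heig' : ∀ i, ∑ j, g i j * c j = lam * c i := by
    intro i
    calc ∑ j, g i j * c j = ∑ j, ∑ k, A i k * A j k * c j := by
          apply Finset.sum_congr rfl
          intro j _
          simp only [hgdef, Finset.sum_mul]
      _ = ∑ k, ∑ j, A i k * (A j k * c j) := by
          rw [Finset.sum_comm]
          simp only [mul_assoc]
      _ = ∑ k, A i k * (lam * v k) := by
          apply Finset.sum_congr rfl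
          intro k _
          rw [← Finset.mul_sum, hrow k]
      _ = lam * c i := by
          simp only [hcdef, Finset.mul_sum]
          apply Finset.sum_congr rfl
          intro k _
          ring
  have hclam : ∑ j, (c j) ^ 2 = lam := by
    calc ∑ j, (c j) ^ 2 = ∑ j, ∑ k, A j k * v k * c j := by
          apply Finset.sum_congr rfl
          intro j _
          simp only [hcdef, pow_two, Finset.sum_mul]
      _ = ∑ k, (∑ j, A j k * c j) * v k := by
          rw [Finset.sum_comm]
          apply Finset.sum_congr rfl
          intro k _
          rw [Finset.sum_mul]
          apply Finset.sum_congr rfl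
          intro j _
          ring
      _ = lam * ∑ k, (v k) ^ 2 := by
          simp only [Finset.mul_sum]
          apply Finset.sum_congr rfl
          intro k _
          rw [hrow k]
          ring
      _ = lam := by rw [hv, mul_one]
  have hG2 : ∀ i j : Fin m, i ≠ j → (g i j) ^ 2 < 1 := by
    intro i j hij
    obtain ⟨h1, h2⟩ := hdist i j hij
    have e1 : ∑ k, (A i k - A j k) ^ 2 = 2 - 2 * g i j := by
      have : ∀ k ∈ Finset.univ, (A i k - A j k) ^ 2
          = ((A i k) ^ 2 + (A j k) ^ 2) - 2 * (A i k * A j k) := by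
        intro k _; ring
      rw [Finset.sum_congr rfl this, Finset.sum_sub_distrib, Finset.sum_add_distrib,
        hnorm i, hnorm j, ← Finset.mul_sum]
      simp [hgdef]
      ring
    have e2 : ∑ k, (A i k + A j k) ^ 2 = 2 + 2 * g i j := by
      have : ∀ k ∈ Finset.univ, (A i k + A j k) ^ 2
          = ((A i k) ^ 2 + (A j k) ^ 2) + 2 * (A i k * A j k) := by
        intro k _; ring
      rw [Finset.sum_congr rfl this, Finset.sum_add_distrib, Finset.sum_add_distrib,
        hnorm i, hnorm j, ← Finset.mul_sum]
      simp [hgdef]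
      ring
    have p1 : 0 < ∑ k, (A i k - A j k) ^ 2 := by
      obtain ⟨k, hk⟩ := Function.ne_iff.mp h1
      apply Finset.sum_pos' (fun k _ => sq_nonneg _)
      exact ⟨k, Finset.mem_univ k, pow_two_pos_of_ne_zero (sub_ne_zero.mpr hk)⟩
    have p2 : 0 < ∑ k, (A i k + A j k) ^ 2 := by
      have h2' : A i ≠ (fun k => - A j k) := by
        intro h; apply h2; funext k; exact congrFun h k
      obtain ⟨k, hk⟩ := Function.ne_iff.mp h2'
      apply Finset.sum_pos' (fun k _ => sq_nonneg _)
      refine ⟨k, Finset.mem_univ k, ?_⟩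
      have hne : A i k + A j k ≠ 0 := by
        intro h; apply hk; linarith
      exact pow_two_pos_of_ne_zero hne
    rw [e1] at p1
    rw [e2] at p2
    nlinarith
  -- key per-pair inequality
  have key : ∀ i j : Fin m, i ≠ j →
      lam - 2 * g i j * c i * c j ≤ ∑ k, ((kkPhi A i j).mulVec v k) ^ 2 := by
    intro i j hij
    have hG2 := hG2 i j hij
    have h1G : 0 < 1 - (g i j) ^ 2 := by linarith
    have hs2 : (Real.sqrt (1 - (g i j) ^ 2)) ^ 2 = 1 - (g i j) ^ 2 :=
      Real.sq_sqrt h1G.le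
    have hspos : 0 < Real.sqrt (1 - (g i j) ^ 2) := Real.sqrt_pos.mpr h1G
    set s : ℝ := Real.sqrt (1 - (g i j) ^ 2) with hsdef
    have hval : ∀ k, (kkPhi A i j).mulVec v k
        = if k = i then (c i - g i j * c j) / s else c k := by
      intro k
      by_cases h : k = i
      · subst h
        simp only [kkPhi, Matrix.mulVec, dotProduct, Matrix.updateRow_self, if_true,
          eq_self_iff_true, ite_true]
        rw [← hsdef, eq_div_iff (ne_of_gt hspos), Finset.sum_mul]
        have : ∀ l ∈ Finset.univ, (A k l - g k j * A j l) / s * v l * s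
            = A k l * v l - g k j * (A j l * v l) := by
          intro l _
          field_simp
        rw [Finset.sum_congr rfl this, Finset.sum_sub_distrib, ← Finset.mul_sum]
      · simp only [kkPhi, Matrix.mulVec, dotProduct, Matrix.updateRow_ne h, if_neg h]; rfl
    have hsum : ∑ k, ((kkPhi A i j).mulVec v k) ^ 2
        = lam - (c i) ^ 2 + ((c i - g i j * c j) / s) ^ 2 := by
      have e : ∀ k ∈ Finset.univ, ((kkPhi A i j).mulVec v k) ^ 2
          = (c k) ^ 2 + (if k = i then ((c i - g i j * c j) / s) ^ 2 - (c i) ^ 2 else 0) := by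
        intro k _
        rw [hval k]
        by_cases h : k = i
        · subst h; simp
        · simp [h]
      rw [Finset.sum_congr rfl e, Finset.sum_add_distrib, hclam,
        Finset.sum_ite_eq' Finset.univ i]
      simp only [Finset.mem_univ, if_true]
      ring
    rw [hsum]
    have hdiv : (c i) ^ 2 - 2 * g i j * c i * c j ≤ ((c i - g i j * c j) / s) ^ 2 := by
      rw [div_pow, hs2, le_div_iff₀ h1G]
      nlinarith [mul_nonneg (sq_nonneg (g i j)) (sq_nonneg (c i - g i j * c j)),
        mul_nonneg (mul_nonneg (sq_nonneg (g i j)) h1G.le) (sq_nonneg (c j))]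
    linarith
  -- summing up
  have inner : ∀ i : Fin m,
      ∑ j ∈ Finset.univ.filter (fun j => j ≠ i), (lam - 2 * g i j * c i * c j)
        = ((m:ℝ) - 1) * lam - 2 * (lam - 1) * (c i) ^ 2 := by
    intro i
    rw [Finset.filter_ne']
    have e : ∀ j ∈ Finset.univ.erase i, lam - 2 * g i j * c i * c j
        = lam - 2 * c i * (g i j * c j) := by
      intro j _; ring
    rw [Finset.sum_congr rfl e, Finset.sum_sub_distrib]
    have h1 : ∑ _j ∈ Finset.univ.erase i, lam = ((m:ℝ) - 1) * lam := by
      rw [Finset.sum_const, Finset.card_erase_of_mem (Finset.mem_univ i),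
        Finset.card_univ, Fintype.card_fin, nsmul_eq_mul]
      have : ((m - 1 : ℕ) : ℝ) = (m:ℝ) - 1 := by
        have h1m : 1 ≤ m := by omega
        push_cast [h1m]
        ring
      rw [this]
    have h2 : ∑ j ∈ Finset.univ.erase i, 2 * c i * (g i j * c j)
        = 2 * c i * (lam * c i - c i) := by
      rw [← Finset.mul_sum, Finset.sum_erase_eq_sub (Finset.mem_univ i), heig' i, hgii i]
      ring
    rw [h1, h2]
    ring
  have hsum_lower : (m:ℝ) * ((m:ℝ) - 1) * lam + 2 * (lam - lam ^ 2)
      ≤ ∑ i : Fin m, ∑ j ∈ Finset.univ.filter (fun j => j ≠ i),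
          ∑ k, ((kkPhi A i j).mulVec v k) ^ 2 := by
    have step1 : ∑ i : Fin m, ∑ j ∈ Finset.univ.filter (fun j => j ≠ i),
          (lam - 2 * g i j * c i * c j)
        ≤ ∑ i : Fin m, ∑ j ∈ Finset.univ.filter (fun j => j ≠ i),
          ∑ k, ((kkPhi A i j).mulVec v k) ^ 2 := by
      apply Finset.sum_le_sum
      intro i _
      apply Finset.sum_le_sum
      intro j hj
      exact key i j (Ne.symm (Finset.mem_filter.mp hj).2)
    refine le_trans (le_of_eq ?_) step1
    rw [Finset.sum_congr rfl (fun i _ => inner i), Finset.sum_sub_distrib]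
    have h1 : ∑ _i : Fin m, ((m:ℝ) - 1) * lam = (m:ℝ) * (((m:ℝ) - 1) * lam) := by
      rw [Finset.sum_const, Finset.card_univ, Fintype.card_fin, nsmul_eq_mul]
    have h2 : ∑ i : Fin m, 2 * (lam - 1) * (c i) ^ 2 = 2 * (lam - 1) * lam := by
      rw [← Finset.mul_sum, hclam]
    rw [h1, h2]
    ring
  constructor
  · have e : lam + (2 / ((m:ℝ) * ((m:ℝ) - 1))) * (lam - lam ^ 2)
        = (1 / ((m:ℝ) * ((m:ℝ) - 1))) * ((m:ℝ) * ((m:ℝ) - 1) * lam + 2 * (lam - lam ^ 2)) := by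
      have hne : (m:ℝ) * ((m:ℝ) - 1) ≠ 0 := ne_of_gt hMpos
      have hc : (1 / ((m:ℝ) * ((m:ℝ) - 1))) * ((m:ℝ) * ((m:ℝ) - 1)) = 1 := one_div_mul_cancel hne
      linear_combination (-lam) * hc
    rw [ge_iff_le, e]
    exact mul_le_mul_of_nonneg_left hsum_lower (by positivity)
  · have h1 : 0 < (2 / ((m:ℝ) * ((m:ℝ) - 1))) * (lam - lam ^ 2) := by
      apply mul_pos (by positivity)
      nlinarith
    linarith
end

section
/- Let A ∈ ℝ^{m×n} be injective with rows A_1,…,A_m, all nonzero, and let x ∈ ℝ^n satisfy Ax = b. Fix x_0 ∈ ℝ^n and k ∈ ℕ. For a tuple of indices (i_1,…,i_k) ∈ {1,…,m}^k define x_t = x_{t−1} + ((b_{i_t} − ⟨A_{i_t}, x_{t−1}⟩)/‖A_{i_t}‖²) A_{i_t} for t = 1,…,k. Then, averaging over tuples with the product weights Π_{t=1}^k ‖A_{i_t}‖²/‖A‖_F², one has Σ_{(i_1,…,i_k)} ( Π_{t=1}^k ‖A_{i_t}‖²/‖A‖_F² ) · ‖x_k − x‖² ≤ (1 − σ_min(A)²/‖A‖_F²)^k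 · ‖x_0 − x‖², where σ_min(A)² is the smallest eigenvalue of AᵀA. -/
open Finset Matrix

lemma rayleigh_aux {n : ℕ} (M : Matrix (Fin n) (Fin n) ℝ) (hM : M.IsHermitian) (σ : ℝ)
    (hb : ∀ μ : ℝ, (∃ v : Fin n → ℝ, v ≠ 0 ∧ M.mulVec v = μ • v) → σ ≤ μ)
    (e : Fin n → ℝ) : σ * ∑ d, e d ^ 2 ≤ e ⬝ᵥ M.mulVec e := by
  set B := M - σ • (1 : Matrix (Fin n) (Fin n) ℝ) with hBdef
  have hB : B.IsHermitian := by
    have : Mᵀ = M := hM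
    simp [Matrix.IsHermitian, hBdef, Matrix.conjTranspose_sub, Matrix.conjTranspose_smul, this]
  have hev : ∀ j, 0 ≤ hB.eigenvalues j := by
    intro j
    have hu := hB.mulVec_eigenvectorBasis j
    set u : Fin n → ℝ := ⇑(hB.eigenvectorBasis j) with hudef
    have hn1 : ‖hB.eigenvectorBasis j‖ = 1 := hB.eigenvectorBasis.orthonormal.1 j
    have hu0 : u ≠ 0 := by
      intro h
      have : hB.eigenvectorBasis j = 0 := by ext d; exact congrFun h d
      rw [this, norm_zero] at hn1; norm_num at hn1
    have hM' : M.mulVec u = (hB.eigenvalues j + σ) • u := by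
      have hB' : B.mulVec u = M.mulVec u - σ • u := by
        simp [hBdef, Matrix.sub_mulVec, Matrix.smul_mulVec, Matrix.one_mulVec]
      rw [hB'] at hu
      have := eq_add_of_sub_eq hu
      rw [this, add_smul]
    have := hb _ ⟨u, hu0, hM'⟩
    linarith
  have hpsd : B.PosSemidef := hB.posSemidef_iff_eigenvalues_nonneg.mpr hev
  have h0 := hpsd.dotProduct_mulVec_nonneg e
  have hBe : B.mulVec e = M.mulVec e - σ • e := by
    simp [hBdef, Matrix.sub_mulVec, Matrix.smul_mulVec, Matrix.one_mulVec]
  rw [hBe] at h0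
  simp only [star_trivial, dotProduct_sub, dotProduct_smul, smul_eq_mul] at h0
  have : e ⬝ᵥ e = ∑ d, e d ^ 2 := by simp [dotProduct, sq]
  rw [this] at h0
  linarith

lemma normsq_mulVec {m n : ℕ} (A : Matrix (Fin m) (Fin n) ℝ) (e : Fin n → ℝ) :
    ∑ i, (∑ l, A i l * e l) ^ 2 = e ⬝ᵥ (Aᵀ * A).mulVec e := by
  rw [← Matrix.mulVec_mulVec, Matrix.dotProduct_mulVec, Matrix.vecMul_transpose]
  simp [dotProduct, Matrix.mulVec, sq]

/-- The Kaczmarz projection of `z` onto the hyperplane `{w : ⟨A i, w⟩ = b i}`. -/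
noncomputable def kacProj {m n : ℕ} (A : Matrix (Fin m) (Fin n) ℝ) (b : Fin m → ℝ)
    (i : Fin m) (z : Fin n → ℝ) : Fin n → ℝ :=
  z + ((b i - ∑ l, A i l * z l) / (∑ l, (A i l) ^ 2)) • A i

/-- Apply the Kaczmarz projections along a list of row indices, first index first. -/
noncomputable def kacIterate {m n : ℕ} (A : Matrix (Fin m) (Fin n) ℝ) (b : Fin m → ℝ) :
    List (Fin m) → (Fin n → ℝ) → (Fin n → ℝ)
  | [], z => z
  | i :: rest, z => kacIterate A b rest (kacProj A b i z)

theorem strohmer_vershynin_randomized_kaczmarz {m n : ℕ}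
    (A : Matrix (Fin m) (Fin n) ℝ) (b : Fin m → ℝ) (x : Fin n → ℝ)
    (hinj : Function.Injective A.mulVec)
    (hrows : ∀ i, A i ≠ 0) (hsol : A.mulVec x = b)
    (x₀ : Fin n → ℝ) (k : ℕ)
    (σsq : ℝ)
    (hσ : IsLeast {μ : ℝ | ∃ v : Fin n → ℝ, v ≠ 0 ∧ (Aᵀ * A).mulVec v = μ • v} σsq) :
    ∑ idx : Fin k → Fin m,
        (∏ t : Fin k, (∑ l, (A (idx t) l) ^ 2) / (∑ i : Fin m, ∑ l, (A i l) ^ 2)) *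
          (∑ d, ((kacIterate A b (List.ofFn idx) x₀) d - x d) ^ 2)
      ≤ (1 - σsq / (∑ i : Fin m, ∑ l, (A i l) ^ 2)) ^ k *
          ∑ d, (x₀ d - x d) ^ 2 := by
  set F : ℝ := ∑ i : Fin m, ∑ l, (A i l) ^ 2 with hFdef
  -- row norms positive
  have hD : ∀ i, 0 < ∑ l, (A i l) ^ 2 := by
    intro i
    obtain ⟨l, hl⟩ : ∃ l, A i l ≠ 0 := by
      by_contra h; push_neg at h; exact hrows i (funext h)
    exact Finset.sum_pos' (fun l _ => sq_nonneg _) ⟨l, Finset.mem_univ _, by positivity⟩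
  -- eigenvector
  obtain ⟨v, hv0, hveq⟩ := hσ.1
  have hne : Nonempty (Fin m) := by
    by_contra h
    have h0 : A.mulVec v = A.mulVec 0 := by ext i; exact (h ⟨i⟩).elim
    exact hv0 (hinj h0)
  have hF : 0 < F := Finset.sum_pos (fun i _ => hD i) Finset.univ_nonempty
  -- Rayleigh bound
  have hray : ∀ e : Fin n → ℝ, σsq * ∑ d, e d ^ 2 ≤ ∑ i, (∑ l, A i l * e l) ^ 2 := by
    intro e
    rw [normsq_mulVec]
    have hherm : (Aᵀ * A).IsHermitian := by
      have : Aᴴ = Aᵀ := rfl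
      simpa [this] using Matrix.isHermitian_conjTranspose_mul_self A
    exact rayleigh_aux _ hherm σsq (fun μ hμ => hσ.2 hμ) e
  -- σsq ≤ F
  have hSv : 0 < ∑ d, v d ^ 2 := by
    obtain ⟨d, hd⟩ : ∃ d, v d ≠ 0 := by
      by_contra h; push_neg at h; exact hv0 (funext h)
    exact Finset.sum_pos' (fun l _ => sq_nonneg _) ⟨d, Finset.mem_univ _, by positivity⟩
  have hσF : σsq ≤ F := by
    have h1 := hray v
    have h2 : ∀ i, (∑ l, A i l * v l) ^ 2 ≤ (∑ l, (A i l) ^ 2) * ∑ l, v l ^ 2 := by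
      intro i
      exact Finset.sum_mul_sq_le_sq_mul_sq Finset.univ (fun l => A i l) (fun l => v l)
    have h3 : ∑ i, (∑ l, A i l * v l) ^ 2 ≤ F * ∑ l, v l ^ 2 := by
      rw [hFdef, Finset.sum_mul]
      exact Finset.sum_le_sum fun i _ => h2 i
    have := le_trans h1 h3
    exact le_of_mul_le_mul_right (by linarith [this]) hSv
  have hq : 0 ≤ 1 - σsq / F := by
    rw [sub_nonneg, div_le_one hF]; exact hσF
  -- b i in terms of x
  have hbx : ∀ i, b i = ∑ l, A i l * x l := by
    intro i; rw [← hsol]; rfl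
  -- one-step bound
  have hstep : ∀ z : Fin n → ℝ,
      ∑ i, ((∑ l, (A i l) ^ 2) / F) * (∑ d, (kacProj A b i z d - x d) ^ 2)
        ≤ (1 - σsq / F) * ∑ d, (z d - x d) ^ 2 := by
    intro z
    have key : ∀ i, ∑ d, (kacProj A b i z d - x d) ^ 2
        = (∑ d, (z d - x d) ^ 2)
          - (∑ l, A i l * (z l - x l)) ^ 2 / (∑ l, (A i l) ^ 2) := by
      intro i
      have hc : b i - ∑ l, A i l * z l = -(∑ l, A i l * (z l - x l)) := by
        rw [hbx i]
        rw [show (∑ l, A i l * (z l - x l))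
            = (∑ l, A i l * z l) - ∑ l, A i l * x l by
          rw [← Finset.sum_sub_distrib]; exact Finset.sum_congr rfl fun l _ => by ring]
        ring
      have hproj : ∀ d, kacProj A b i z d - x d
          = (z d - x d) + (-(∑ l, A i l * (z l - x l)) / (∑ l, (A i l) ^ 2)) * A i d := by
        intro d
        simp only [kacProj, Pi.add_apply, Pi.smul_apply, smul_eq_mul, hc]
        ring
      simp_rw [hproj]
      have expand : ∀ d, ((z d - x d) + (-(∑ l, A i l * (z l - x l)) / (∑ l, (A i l) ^ 2)) * A i d) ^ 2
          = (z d - x d) ^ 2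
            + (2 * (-(∑ l, A i l * (z l - x l)) / (∑ l, (A i l) ^ 2))) * (A i d * (z d - x d))
            + (-(∑ l, A i l * (z l - x l)) / (∑ l, (A i l) ^ 2)) ^ 2 * (A i d) ^ 2 := by
        intro d; ring
      simp_rw [expand, Finset.sum_add_distrib, ← Finset.mul_sum]
      have hDi := hD i
      field_simp
      ring
    have step1 : ∑ i, ((∑ l, (A i l) ^ 2) / F) * (∑ d, (kacProj A b i z d - x d) ^ 2)
        = (F * (∑ d, (z d - x d) ^ 2) - ∑ i, (∑ l, A i l * (z l - x l)) ^ 2) / F := by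
      rw [show F * (∑ d, (z d - x d) ^ 2) = ∑ i, (∑ l, (A i l) ^ 2) * (∑ d, (z d - x d) ^ 2) by
        rw [hFdef, Finset.sum_mul]]
      rw [← Finset.sum_sub_distrib, Finset.sum_div]
      refine Finset.sum_congr rfl fun i _ => ?_
      rw [key i]
      have hDi := hD i
      field_simp
    rw [step1]
    have step2 : (1 - σsq / F) * ∑ d, (z d - x d) ^ 2
        = (F * (∑ d, (z d - x d) ^ 2) - σsq * ∑ d, (z d - x d) ^ 2) / F := by
      field_simp
    rw [step2]
    have := hray (fun l => z l - x l)
    rw [div_le_div_iff_of_pos_right hF]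
    linarith
  -- induction over the number of steps, generalizing the starting point
  suffices H : ∀ (k : ℕ) (z : Fin n → ℝ),
      ∑ idx : Fin k → Fin m,
          (∏ t : Fin k, (∑ l, (A (idx t) l) ^ 2) / F) *
            (∑ d, ((kacIterate A b (List.ofFn idx) z) d - x d) ^ 2)
        ≤ (1 - σsq / F) ^ k * ∑ d, (z d - x d) ^ 2 by
    exact H k x₀
  intro k
  induction k with
  | zero =>
    intro z
    simp [kacIterate]
  | succ k ih =>
    intro z
    have hEq := Equiv.sum_comp (Fin.consEquiv (fun _ : Fin (k + 1) => Fin m))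
      (fun idx : Fin (k + 1) → Fin m =>
        (∏ t : Fin (k + 1), (∑ l, (A (idx t) l) ^ 2) / F) *
          (∑ d, ((kacIterate A b (List.ofFn idx) z) d - x d) ^ 2))
    rw [← hEq, Fintype.sum_prod_type]
    have hpt : ∀ (i : Fin m) (rest : Fin k → Fin m),
        (∏ t : Fin (k + 1),
            (∑ l, (A (((Fin.consEquiv (fun _ : Fin (k + 1) => Fin m)) (i, rest)) t) l) ^ 2) / F) *
          (∑ d, ((kacIterate A b
              (List.ofFn ((Fin.consEquiv (fun _ : Fin (k + 1) => Fin m)) (i, rest))) z) d - x d) ^ 2)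
        = ((∑ l, (A i l) ^ 2) / F) *
            ((∏ t : Fin k, (∑ l, (A (rest t) l) ^ 2) / F) *
              (∑ d, ((kacIterate A b (List.ofFn rest) (kacProj A b i z)) d - x d) ^ 2)) := by
      intro i rest
      have hcons : ⇑(Fin.consEquiv (fun _ : Fin (k + 1) => Fin m)) (i, rest) = Fin.cons i rest := rfl
      rw [hcons, List.ofFn_succ, Fin.prod_univ_succ]
      simp only [Fin.cons_zero, Fin.cons_succ, kacIterate]
      rw [mul_assoc]
    calc ∑ i : Fin m, ∑ rest : Fin k → Fin m,
            (∏ t : Fin (k + 1),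
                (∑ l, (A (((Fin.consEquiv (fun _ : Fin (k + 1) => Fin m)) (i, rest)) t) l) ^ 2) / F) *
              (∑ d, ((kacIterate A b
                  (List.ofFn ((Fin.consEquiv (fun _ : Fin (k + 1) => Fin m)) (i, rest))) z) d - x d) ^ 2)
        = ∑ i : Fin m, ((∑ l, (A i l) ^ 2) / F) *
            ∑ rest : Fin k → Fin m,
              (∏ t : Fin k, (∑ l, (A (rest t) l) ^ 2) / F) *
                (∑ d, ((kacIterate A b (List.ofFn rest) (kacProj A b i z)) d - x d) ^ 2) := by
          refine Finset.sum_congr rfl fun i _ => ?_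
          rw [Finset.mul_sum]
          exact Finset.sum_congr rfl fun rest _ => hpt i rest
      _ ≤ ∑ i : Fin m, ((∑ l, (A i l) ^ 2) / F) *
            ((1 - σsq / F) ^ k * ∑ d, (kacProj A b i z d - x d) ^ 2) := by
          refine Finset.sum_le_sum fun i _ => ?_
          refine mul_le_mul_of_nonneg_left (ih (kacProj A b i z)) ?_
          have := hD i
          positivity
      _ = (1 - σsq / F) ^ k *
            ∑ i : Fin m, ((∑ l, (A i l) ^ 2) / F) * ∑ d, (kacProj A b i z d - x d) ^ 2 := by
          rw [Finset.mul_sum]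
          exact Finset.sum_congr rfl fun i _ => by ring
      _ ≤ (1 - σsq / F) ^ k * ((1 - σsq / F) * ∑ d, (z d - x d) ^ 2) :=
          mul_le_mul_of_nonneg_left (hstep z) (pow_nonneg hq k)
      _ = (1 - σsq / F) ^ (k + 1) * ∑ d, (z d - x d) ^ 2 := by ring
end

section
/- Fix k ∈ ℕ and a, b ∈ ℝ, and define f : ℝ × ℝ → ℝ by f(t,x) = e^{−2·sin(kπ/4)²·t}·(a·sin(kx) + b·cos(kx)). Then f satisfies, for all t and x, ∂f/∂t (t,x) = −f(t,x) + (1/2)·f(t, x − π/2) + (1/2)·f(t, x + π/2). -/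
open Real

theorem linearized_mean_field_solution (k : ℕ) (a b : ℝ) :
    ∀ (t x : ℝ),
      HasDerivAt
        (fun s : ℝ => Real.exp (-2 * Real.sin ((k : ℝ) * π / 4) ^ 2 * s) *
          (a * Real.sin ((k : ℝ) * x) + b * Real.cos ((k : ℝ) * x)))
        (-(Real.exp (-2 * Real.sin ((k : ℝ) * π / 4) ^ 2 * t) *
              (a * Real.sin ((k : ℝ) * x) + b * Real.cos ((k : ℝ) * x)))
          + (1 / 2) * (Real.exp (-2 * Real.sin ((k : ℝ) * π / 4) ^ 2 * t) *
              (a * Real.sin ((k : ℝ) * (x - π / 2)) + b * Real.cos ((k : ℝ) * (x - π / 2))))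
          + (1 / 2) * (Real.exp (-2 * Real.sin ((k : ℝ) * π / 4) ^ 2 * t) *
              (a * Real.sin ((k : ℝ) * (x + π / 2)) + b * Real.cos ((k : ℝ) * (x + π / 2)))))
        t := by
  intro t x
  have h := (((hasDerivAt_id t).const_mul (-2 * Real.sin ((k : ℝ) * π / 4) ^ 2)).exp).mul_const
    (a * Real.sin ((k : ℝ) * x) + b * Real.cos ((k : ℝ) * x))
  simp only [id] at h
  convert h using 1
  case e'_4 => rfl
  case e'_5 => rfl
  have h1 : (k : ℝ) * (x - π / 2) = (k : ℝ) * x - (k : ℝ) * (π / 2) := by ring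
  have h2 : (k : ℝ) * (x + π / 2) = (k : ℝ) * x + (k : ℝ) * (π / 2) := by ring
  have h3 : (k : ℝ) * (π / 2) = 2 * ((k : ℝ) * π / 4) := by ring
  have h4 : Real.cos ((k : ℝ) * (π / 2)) = 1 - 2 * Real.sin ((k : ℝ) * π / 4) ^ 2 := by
    rw [h3, Real.cos_two_mul, Real.sin_sq]; ring
  rw [h1, h2, Real.sin_sub, Real.sin_add, Real.cos_sub, Real.cos_add, h4]
  ring
end
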